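/- arXiv:2006.12766 — 8 statements merged into one kernel-verified Lean document; each statement's English description precedes it below -/
import Mathlib

section
/- Characterization of realizable closed loop maps (Theorem III.1): Let f : ℝⁿ × ℝᵐ → ℝⁿ and let Ψx, Ψu be causal operators mapping ℝⁿ-valued sequences to ℝⁿ-valued and ℝᵐ-valued sequences respectively. Then there exists a causal controller K such that for every w : ℕ → ℝⁿ the unique closed-loop trajectory (x, u) of the plant x_t = f(x_{t−1},u_{t−1}) + w_t, x_0 = w_0, u_t = K_t(x_t,…,x_0) equals (Ψx(w), Ψu(w)), if and only if for every w : ℕ → ℝⁿ one has Ψx(w)_0 = w_0 and Ψx(w)_t = f(Ψx(w)_{t−1}, Ψu(w)_{t−1}) + w_t for all t ≥ 1. -/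
noncomputable def Wrec (n m : ℕ) (f : (Fin n → ℝ) → (Fin m → ℝ) → (Fin n → ℝ))
    (Ψu : (t : ℕ) → (Fin (t + 1) → (Fin n → ℝ)) → (Fin m → ℝ))
    (x : ℕ → Fin n → ℝ) : ℕ → Fin n → ℝ
  | 0 => x 0
  | t + 1 => x (t + 1) -
      f (x t) (Ψu t (fun j : Fin (t + 1) => Wrec n m f Ψu x j))
  termination_by t => t
  decreasing_by exact j.isLt

lemma Wrec_congr (n m : ℕ) (f : (Fin n → ℝ) → (Fin m → ℝ) → (Fin n → ℝ))
    (Ψu : (t : ℕ) → (Fin (t + 1) → (Fin n → ℝ)) → (Fin m → ℝ))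
    (x y : ℕ → Fin n → ℝ) :
    ∀ t : ℕ, (∀ s ≤ t, x s = y s) → Wrec n m f Ψu x t = Wrec n m f Ψu y t := by
  intro t
  induction t using Nat.strong_induction_on with
  | _ t ih =>
    intro h
    cases t with
    | zero => simpa [Wrec] using h 0 le_rfl
    | succ t =>
      rw [Wrec, Wrec, h (t+1) le_rfl, h t (by omega)]
      have harg : (fun j : Fin (t + 1) => Wrec n m f Ψu x j)
          = (fun j : Fin (t + 1) => Wrec n m f Ψu y j) := by
        funext j
        exact ih j (by have := j.isLt; omega) (fun s hs => h s (by have := j.isLt; omega))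
      rw [harg]

lemma Wrec_eq (n m : ℕ) (f : (Fin n → ℝ) → (Fin m → ℝ) → (Fin n → ℝ))
    (Ψu : (t : ℕ) → (Fin (t + 1) → (Fin n → ℝ)) → (Fin m → ℝ))
    (w x : ℕ → Fin n → ℝ)
    (h0 : x 0 = w 0)
    (hd : ∀ t : ℕ, x (t + 1) = f (x t) (Ψu t (fun j : Fin (t + 1) => w j)) + w (t + 1)) :
    ∀ t : ℕ, Wrec n m f Ψu x t = w t := by
  intro t
  induction t using Nat.strong_induction_on with
  | _ t ih =>
    cases t with
    | zero => simpa [Wrec] using h0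
    | succ t =>
      rw [Wrec]
      have harg : (fun j : Fin (t + 1) => Wrec n m f Ψu x j)
          = (fun j : Fin (t + 1) => w j) := by
        funext j
        exact ih j (by have := j.isLt; omega)
      rw [harg, hd t, add_sub_cancel_left]

/-- Characterization of realizable closed loop maps (Theorem III.1).
There exists a causal controller `K` such that for every disturbance `w` the
(unique) closed-loop trajectory `(x, u)` of the plant
`x_t = f(x_{t-1}, u_{t-1}) + w_t`, `x_0 = w_0`, `u_t = K_t(x_t, …, x_0)`
equals `(Ψx(w), Ψu(w))`, if and only if the closed-loop-map equation
`Ψx(w)_0 = w_0` and `Ψx(w)_t = f(Ψx(w)_{t-1}, Ψu(w)_{t-1}) + w_t` (t ≥ 1)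
holds for all `w`. -/
theorem clm_characterization (n m : ℕ)
    (f : (Fin n → ℝ) → (Fin m → ℝ) → (Fin n → ℝ))
    (Ψx : (t : ℕ) → (Fin (t + 1) → (Fin n → ℝ)) → (Fin n → ℝ))
    (Ψu : (t : ℕ) → (Fin (t + 1) → (Fin n → ℝ)) → (Fin m → ℝ)) :
    (∃ K : (t : ℕ) → (Fin (t + 1) → (Fin n → ℝ)) → (Fin m → ℝ),
      ∀ w : ℕ → Fin n → ℝ,
        ∃ (x : ℕ → Fin n → ℝ) (u : ℕ → Fin m → ℝ),
          (x 0 = w 0 ∧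
           (∀ t : ℕ, 1 ≤ t → x t = f (x (t - 1)) (u (t - 1)) + w t) ∧
           (∀ t : ℕ, u t = K t (fun j : Fin (t + 1) => x j))) ∧
          (∀ t : ℕ, x t = Ψx t (fun j : Fin (t + 1) => w j)) ∧
          (∀ t : ℕ, u t = Ψu t (fun j : Fin (t + 1) => w j))) ↔
    (∀ w : ℕ → Fin n → ℝ,
      Ψx 0 (fun j : Fin 1 => w j) = w 0 ∧
      ∀ t : ℕ, 1 ≤ t →
        Ψx t (fun j : Fin (t + 1) => w j) =
          f (Ψx (t - 1) (fun j : Fin (t - 1 + 1) => w j))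
            (Ψu (t - 1) (fun j : Fin (t - 1 + 1) => w j)) + w t) := by
  constructor
  · rintro ⟨K, hK⟩ w
    obtain ⟨x, u, ⟨hx0, hdyn, -⟩, hxΨ, huΨ⟩ := hK w
    constructor
    · rw [← hxΨ 0, hx0]
    · intro t ht
      rw [← hxΨ t, ← hxΨ (t - 1), ← huΨ (t - 1)]
      exact hdyn t ht
  · intro H
    refine ⟨fun t h => Ψu t (fun j : Fin (t + 1) =>
        Wrec n m f Ψu (fun s => if hs : s < t + 1 then h ⟨s, hs⟩ else 0) j), fun w => ?_⟩
    refine ⟨fun t => Ψx t (fun j : Fin (t + 1) => w j),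
           fun t => Ψu t (fun j : Fin (t + 1) => w j), ⟨(H w).1, ?_, ?_⟩, fun t => rfl, fun t => rfl⟩
    · intro t ht; exact (H w).2 t ht
    · intro t
      have hW : ∀ s : ℕ, Wrec n m f Ψu (fun s' => Ψx s' (fun j : Fin (s' + 1) => w j)) s = w s := by
        refine Wrec_eq n m f Ψu w _ (H w).1 (fun s => ?_)
        have := (H w).2 (s + 1) (by omega)
        simpa using this
      have hcong : ∀ j : Fin (t + 1),
          Wrec n m f Ψu (fun s => if hs : s < t + 1 then
            Ψx s (fun j : Fin (s + 1) => w j) else 0) j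
          = w j := by
        intro j
        rw [Wrec_congr n m f Ψu _ (fun s' => Ψx s' (fun j' : Fin (s' + 1) => w j')) j
            (fun s hs => by have := j.isLt; rw [dif_pos (by omega)])]
        exact hW j
      simp only [hcong]
end

section
/- System-level implementation realizes its closed loop maps: Let f : ℝⁿ × ℝᵐ → ℝⁿ and let (Ψx, Ψu) be causal operators satisfying the CLM equation for f. Consider the closed loop consisting of the plant x_t = f(x_{t−1}, u_{t−1}) + w_t (t ≥ 1), x_0 = w_0, together with the system-level controller: internal state ŵ_0 = x_0, control u_t = Ψu_t(ŵ_t, …, ŵ_0), and ŵ_{t+1} = x_{t+1} − Ψx_{t+1}(0, ŵ_t, …, ŵ_0). Then for every disturbance sequence w : ℕ → ℝⁿ the resulting trajectories satisfy ŵ_t = w_t, x_t = Ψx(w)_t, and u_t = Ψu(w)_t for all t. -/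
/-- The system-level implementation realizes its closed loop maps.
If `(Ψx, Ψu)` satisfy the CLM equation for `f`, then the closed loop of the
plant `x_t = f(x_{t-1}, u_{t-1}) + w_t`, `x_0 = w_0`, with the system-level
controller `wHat_0 = x_0`, `u_t = Ψu_t(wHat_t, …, wHat_0)`,
`wHat_{t+1} = x_{t+1} − Ψx_{t+1}(0, wHat_t, …, wHat_0)` satisfies
`wHat_t = w_t`, `x_t = Ψx(w)_t`, `u_t = Ψu(w)_t` for all `t`. -/
theorem sl_implementation_realizes (n m : ℕ)
    (f : (Fin n → ℝ) → (Fin m → ℝ) → (Fin n → ℝ))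
    (Ψx : (t : ℕ) → (Fin (t + 1) → (Fin n → ℝ)) → (Fin n → ℝ))
    (Ψu : (t : ℕ) → (Fin (t + 1) → (Fin n → ℝ)) → (Fin m → ℝ))
    (hCLM : ∀ w : ℕ → Fin n → ℝ,
      Ψx 0 (fun j : Fin 1 => w j) = w 0 ∧
      ∀ t : ℕ, 1 ≤ t →
        Ψx t (fun j : Fin (t + 1) => w j) =
          f (Ψx (t - 1) (fun j : Fin (t - 1 + 1) => w j))
            (Ψu (t - 1) (fun j : Fin (t - 1 + 1) => w j)) + w t)
    (w x : ℕ → Fin n → ℝ) (u : ℕ → Fin m → ℝ) (wHat : ℕ → Fin n → ℝ)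
    (hx0 : x 0 = w 0)
    (hx : ∀ t : ℕ, 1 ≤ t → x t = f (x (t - 1)) (u (t - 1)) + w t)
    (hu : ∀ t : ℕ, u t = Ψu t (fun j : Fin (t + 1) => wHat j))
    (hwHat0 : wHat 0 = x 0)
    (hwHat : ∀ t : ℕ, wHat (t + 1) = x (t + 1) -
      Ψx (t + 1) (fun j : Fin (t + 2) => if (j : ℕ) = t + 1 then 0 else wHat j)) :
    ∀ t : ℕ, wHat t = w t ∧
      x t = Ψx t (fun j : Fin (t + 1) => w j) ∧
      u t = Ψu t (fun j : Fin (t + 1) => w j) := by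
  intro t
  induction t using Nat.strong_induction_on with
  | _ t ih =>
    match t with
    | 0 =>
      have h1 : wHat 0 = w 0 := by rw [hwHat0, hx0]
      refine ⟨h1, ?_, ?_⟩
      · rw [hx0]; exact ((hCLM w).1).symm
      · have e : (fun j : Fin 1 => wHat j) = (fun j : Fin 1 => w j) := by
          funext j
          have hj : (j : ℕ) = 0 := by omega
          rw [hj, h1]
        rw [hu 0, e]
    | t + 1 =>
      have hWle : ∀ j : ℕ, j ≤ t → wHat j = w j := fun j hj => (ih j (by omega)).1
      have hxt : x t = Ψx t (fun j : Fin (t+1) => w j) := (ih t (by omega)).2.1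
      have hut : u t = Ψu t (fun j : Fin (t+1) => w j) := (ih t (by omega)).2.2
      have h2 : Ψx (t+1) (fun j : Fin (t+2) => w j)
          = f (Ψx t (fun j : Fin (t+1) => w j)) (Ψu t (fun j : Fin (t+1) => w j)) + w (t+1) :=
        (hCLM w).2 (t+1) (by omega)
      have hxt1 : x (t+1) = Ψx (t+1) (fun j : Fin (t+2) => w j) := by
        have hx1 : x (t+1) = f (x t) (u t) + w (t+1) := hx (t+1) (by omega)
        rw [hx1, hxt, hut, h2]
      set w' : ℕ → Fin n → ℝ := fun s => if s = t+1 then 0 else w s with hw'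
      have hx' : Ψx (t+1) (fun j : Fin (t+2) => w' j) =
          f (Ψx t (fun j : Fin (t+1) => w j)) (Ψu t (fun j : Fin (t+1) => w j)) := by
        have h : Ψx (t+1) (fun j : Fin (t+2) => w' j)
            = f (Ψx t (fun j : Fin (t+1) => w' j)) (Ψu t (fun j : Fin (t+1) => w' j)) + w' (t+1) :=
          (hCLM w').2 (t+1) (by omega)
        have e1 : (fun j : Fin (t+1) => w' j) = (fun j : Fin (t+1) => w j) := by
          funext j
          have hj : (j:ℕ) ≠ t+1 := by omega
          simp [hw', hj]
        rw [h, e1]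
        simp [hw']
      have hargs : (fun j : Fin (t+2) => if (j:ℕ) = t+1 then 0 else wHat j)
          = (fun j : Fin (t+2) => w' j) := by
        funext j
        by_cases hj : (j:ℕ) = t+1
        · simp [hw', hj]
        · have hle : (j:ℕ) ≤ t := by omega
          simp [hw', hj, hWle j hle]
      have hwhat1 : wHat (t+1) = w (t+1) := by
        rw [hwHat t, hargs, hx', hxt1, h2]
        abel
      refine ⟨hwhat1, hxt1, ?_⟩
      have e : (fun j : Fin (t+2) => wHat j) = (fun j : Fin (t+2) => w j) := by
        funext j
        by_cases hj : (j:ℕ) = t+1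
        · rw [hj, hwhat1]
        · exact hWle j (by omega)
      rw [hu (t+1), e]
end

section
/- Uniqueness of the realizing controller: Let f : ℝⁿ × ℝᵐ → ℝⁿ and let (Ψx, Ψu) be causal operators satisfying the CLM equation for f. If K and K′ are two causal controllers each realizing (Ψx, Ψu) — i.e., for every w : ℕ → ℝⁿ the unique closed-loop trajectory of the plant x_t = f(x_{t−1},u_{t−1}) + w_t, x_0 = w_0, under the controller equals (Ψx(w), Ψu(w)) — then K_t = K′_t as functions on (ℝⁿ)^{t+1} for every t; in fact K is uniquely determined by K = Ψu ∘ (Ψx)⁻¹, where Ψx⁻¹ is the (causal) inverse of Ψx on sequences. -/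
/-- Uniqueness of the realizing controller.
If `(Ψx, Ψu)` satisfy the CLM equation for `f` and two causal controllers `K`,
`K'` both realize `(Ψx, Ψu)` (for every `w` the closed-loop trajectory equals
`(Ψx(w), Ψu(w))`), then `K_t = K'_t` as functions on histories for every `t`;
moreover `K = Ψu ∘ (Ψx)⁻¹`: for any two-sided inverse `S` of the operator
`w ↦ Ψx(w)` on sequences, `K_t(x_t,…,x_0) = Ψu_t((S x)_t, …, (S x)_0)`. -/
theorem realizing_controller_unique (n m : ℕ)
    (f : (Fin n → ℝ) → (Fin m → ℝ) → (Fin n → ℝ))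
    (Ψx : (t : ℕ) → (Fin (t + 1) → (Fin n → ℝ)) → (Fin n → ℝ))
    (Ψu : (t : ℕ) → (Fin (t + 1) → (Fin n → ℝ)) → (Fin m → ℝ))
    (hCLM : ∀ w : ℕ → Fin n → ℝ,
      Ψx 0 (fun j : Fin 1 => w j) = w 0 ∧
      ∀ t : ℕ, 1 ≤ t →
        Ψx t (fun j : Fin (t + 1) => w j) =
          f (Ψx (t - 1) (fun j : Fin (t - 1 + 1) => w j))
            (Ψu (t - 1) (fun j : Fin (t - 1 + 1) => w j)) + w t)
    (K K' : (t : ℕ) → (Fin (t + 1) → (Fin n → ℝ)) → (Fin m → ℝ))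
    (hK : ∀ w : ℕ → Fin n → ℝ,
      ∃ (x : ℕ → Fin n → ℝ) (u : ℕ → Fin m → ℝ),
        (x 0 = w 0 ∧
         (∀ t : ℕ, 1 ≤ t → x t = f (x (t - 1)) (u (t - 1)) + w t) ∧
         (∀ t : ℕ, u t = K t (fun j : Fin (t + 1) => x j))) ∧
        (∀ t : ℕ, x t = Ψx t (fun j : Fin (t + 1) => w j)) ∧
        (∀ t : ℕ, u t = Ψu t (fun j : Fin (t + 1) => w j)))
    (hK' : ∀ w : ℕ → Fin n → ℝ,
      ∃ (x : ℕ → Fin n → ℝ) (u : ℕ → Fin m → ℝ),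
        (x 0 = w 0 ∧
         (∀ t : ℕ, 1 ≤ t → x t = f (x (t - 1)) (u (t - 1)) + w t) ∧
         (∀ t : ℕ, u t = K' t (fun j : Fin (t + 1) => x j))) ∧
        (∀ t : ℕ, x t = Ψx t (fun j : Fin (t + 1) => w j)) ∧
        (∀ t : ℕ, u t = Ψu t (fun j : Fin (t + 1) => w j))) :
    (∀ (t : ℕ) (h : Fin (t + 1) → (Fin n → ℝ)), K t h = K' t h) ∧
    (∀ S : (ℕ → Fin n → ℝ) → (ℕ → Fin n → ℝ),
      Function.LeftInverse S
        (fun (w : ℕ → Fin n → ℝ) (t : ℕ) => Ψx t (fun j : Fin (t + 1) => w j)) →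
      Function.RightInverse S
        (fun (w : ℕ → Fin n → ℝ) (t : ℕ) => Ψx t (fun j : Fin (t + 1) => w j)) →
      ∀ (x : ℕ → Fin n → ℝ) (t : ℕ),
        K t (fun j : Fin (t + 1) => x j) =
          Ψu t (fun j : Fin (t + 1) => S x j)) := by
  -- uniqueness of the closed-loop trajectory for a fixed controller and disturbance
  have uniq : ∀ (Kc : (t : ℕ) → (Fin (t + 1) → (Fin n → ℝ)) → (Fin m → ℝ))
      (w x x' : ℕ → Fin n → ℝ) (u u' : ℕ → Fin m → ℝ),
      x 0 = w 0 → (∀ t, 1 ≤ t → x t = f (x (t - 1)) (u (t - 1)) + w t) →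
      (∀ t, u t = Kc t (fun j : Fin (t + 1) => x j)) →
      x' 0 = w 0 → (∀ t, 1 ≤ t → x' t = f (x' (t - 1)) (u' (t - 1)) + w t) →
      (∀ t, u' t = Kc t (fun j : Fin (t + 1) => x' j)) →
      ∀ t, x t = x' t ∧ u t = u' t := by
    intro Kc w x x' u u' hx0 hxs hu hx0' hxs' hu'
    have hx : ∀ t, x t = x' t := by
      intro t
      induction t using Nat.strong_induction_on with
      | _ t ih =>
        match t with
        | 0 => rw [hx0, hx0']
        | Nat.succ s =>
          rw [hxs (s + 1) (Nat.le_add_left 1 s), hxs' (s + 1) (Nat.le_add_left 1 s)]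
          simp only [Nat.add_sub_cancel]
          have hxe : x s = x' s := ih s (Nat.lt_succ_self s)
          have hue : u s = u' s := by
            rw [hu, hu']
            have : (fun j : Fin (s + 1) => x j) = (fun j : Fin (s + 1) => x' j) :=
              funext fun j => ih j j.isLt
            rw [this]
          rw [hxe, hue]
    refine fun t => ⟨hx t, ?_⟩
    rw [hu, hu']
    have : (fun j : Fin (t + 1) => x j) = (fun j : Fin (t + 1) => x' j) :=
      funext fun j => hx j
    rw [this]
  constructor
  · intro t h
    set x : ℕ → Fin n → ℝ := fun j => if hj : j < t + 1 then h ⟨j, hj⟩ else 0 with hxdef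
    set u : ℕ → Fin m → ℝ := fun s => K s (fun j : Fin (s + 1) => x j) with hudef
    set w : ℕ → Fin n → ℝ :=
      fun s => if s = 0 then x 0 else x s - f (x (s - 1)) (u (s - 1)) with hwdef
    have hw0 : x 0 = w 0 := by simp [hwdef]
    have hws : ∀ s, 1 ≤ s → x s = f (x (s - 1)) (u (s - 1)) + w s := by
      intro s hs
      have : s ≠ 0 := Nat.one_le_iff_ne_zero.mp hs
      simp [hwdef, this]
    obtain ⟨xh, uh, ⟨h10, h1s, h1u⟩, h1x, h1U⟩ := hK w
    obtain ⟨x', u', ⟨h20, h2s, h2u⟩, h2x, h2U⟩ := hK' w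
    have e1 := uniq K w x xh u uh hw0 hws (fun s => rfl) h10 h1s h1u
    have hx' : ∀ s, x' s = x s := by
      intro s; rw [h2x s, ← h1x s, ← (e1 s).1]
    have hpref : (fun j : Fin (t + 1) => x j) = h := by
      funext j
      simp [hxdef, j.isLt]
      exact fun hlt => absurd hlt (not_lt.mpr (Nat.lt_succ_iff.mp j.isLt))
    calc K t h = u t := by rw [hudef]; simp [hpref]
      _ = uh t := (e1 t).2
      _ = Ψu t (fun j : Fin (t + 1) => w j) := h1U t
      _ = u' t := (h2U t).symm
      _ = K' t (fun j : Fin (t + 1) => x' j) := h2u t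
      _ = K' t h := by rw [show (fun j : Fin (t + 1) => x' j) = h by
            funext j; rw [hx' j]; exact congrFun hpref j]
  · intro S hL hR x t
    obtain ⟨xh, uh, ⟨h10, h1s, h1u⟩, h1x, h1U⟩ := hK (S x)
    have hxh : ∀ s, xh s = x s := by
      intro s
      rw [h1x s]
      exact congrFun (hR x) s
    have hpref : (fun j : Fin (t + 1) => xh j) = (fun j : Fin (t + 1) => x j) := by
      funext j; exact hxh j
    rw [← hpref, ← h1u t, h1U t]
end

section
/- Linear FIR closed-loop-map characterization: Let A ∈ ℝ^{n×n}, B ∈ ℝ^{n×m}, T ≥ 1, and matrices R_1, …, R_T ∈ ℝ^{n×n}, M_1, …, M_T ∈ ℝ^{m×n}. Define the FIR maps Ψx(w)_t = Σ_{k=1}^{min(t+1,T)} R_k w_{t+1−k} and Ψu(w)_t = Σ_{k=1}^{min(t+1,T)} M_k w_{t+1−k} for w : ℕ → ℝⁿ. Then (Ψx, Ψu) satisfies Ψx(w)_0 = w_0 and Ψx(w)_t = A·Ψx(w)_{t−1} + B·Ψu(w)_{t−1} + w_t for every w and every t ≥ 1, if and only if R_1 = I, R_{k+1} = A R_k + B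 M_k for all 1 ≤ k ≤ T−1, and A R_T + B M_T = 0. -/
/-- The FIR map associated with matrices `Mm 1, …, Mm T`:
`(fir Mm T w)_t = Σ_{k=1}^{min(t+1,T)} Mm_k w_{t+1-k}`. -/
noncomputable def fir {p n : ℕ} (Mm : ℕ → Matrix (Fin p) (Fin n) ℝ) (T : ℕ)
    (w : ℕ → Fin n → ℝ) (t : ℕ) : Fin p → ℝ :=
  ∑ k ∈ Finset.Icc 1 (min (t + 1) T), (Mm k).mulVec (w (t + 1 - k))

lemma mat_ext_of_mulVec {p q : ℕ} {A B : Matrix (Fin p) (Fin q) ℝ}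
    (h : ∀ v, A.mulVec v = B.mulVec v) : A = B := by
  ext i j
  have := congrFun (h (Pi.single j 1)) i
  simpa [Matrix.mulVec_single] using this

lemma fir_delta {p n T : ℕ} (Mm : ℕ → Matrix (Fin p) (Fin n) ℝ) (v : Fin n → ℝ) (t : ℕ) :
    fir Mm T (fun s => if s = 0 then v else 0) t =
      if t + 1 ≤ T then (Mm (t + 1)).mulVec v else 0 := by
  unfold fir
  by_cases h : t + 1 ≤ T
  · rw [if_pos h, min_eq_left h]
    rw [Finset.sum_eq_single (t + 1)]
    · simp
    · intro k hk hne
      simp only [Finset.mem_Icc] at hk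
      have : t + 1 - k ≠ 0 := by omega
      simp [this]
    · intro hk
      simp only [Finset.mem_Icc] at hk
      omega
  · rw [if_neg h]
    apply Finset.sum_eq_zero
    intro k hk
    simp only [Finset.mem_Icc] at hk
    have : t + 1 - k ≠ 0 := by omega
    simp [this]

lemma mulVec_sum {p q : ℕ} (A : Matrix (Fin p) (Fin q) ℝ) {ι : Type*} (s : Finset ι)
    (f : ι → Fin q → ℝ) : A.mulVec (∑ i ∈ s, f i) = ∑ i ∈ s, A.mulVec (f i) := by
  ext i
  simp only [Matrix.mulVec, dotProduct, Finset.sum_apply, Finset.mul_sum]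
  exact Finset.sum_comm

/-- Linear FIR closed-loop-map characterization.
The FIR maps `Ψx(w)_t = Σ R_k w_{t+1-k}`, `Ψu(w)_t = Σ M_k w_{t+1-k}` satisfy
the closed-loop-map equations `Ψx(w)_0 = w_0`,
`Ψx(w)_t = A Ψx(w)_{t-1} + B Ψu(w)_{t-1} + w_t` (t ≥ 1) for every `w`, if and
only if `R_1 = I`, `R_{k+1} = A R_k + B M_k` for `1 ≤ k ≤ T-1`, and
`A R_T + B M_T = 0`. -/
theorem linear_fir_clm_characterization (n m T : ℕ) (hT : 1 ≤ T)
    (A : Matrix (Fin n) (Fin n) ℝ) (B : Matrix (Fin n) (Fin m) ℝ)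
    (R : ℕ → Matrix (Fin n) (Fin n) ℝ) (M : ℕ → Matrix (Fin m) (Fin n) ℝ) :
    (∀ w : ℕ → Fin n → ℝ,
      fir R T w 0 = w 0 ∧
      ∀ t : ℕ, 1 ≤ t →
        fir R T w t =
          A.mulVec (fir R T w (t - 1)) + B.mulVec (fir M T w (t - 1)) + w t) ↔
    (R 1 = 1 ∧
     (∀ k : ℕ, 1 ≤ k → k + 1 ≤ T → R (k + 1) = A * R k + B * M k) ∧
     A * R T + B * M T = 0) := by
  constructor
  · intro h
    refine ⟨?_, ?_, ?_⟩
    · apply mat_ext_of_mulVec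
      intro v
      have h0 := (h (fun s => if s = 0 then v else 0)).1
      rw [fir_delta, if_pos (by omega)] at h0
      simpa using h0
    · intro k hk hkT
      apply mat_ext_of_mulVec
      intro v
      have hrec := (h (fun s => if s = 0 then v else 0)).2 k hk
      rw [fir_delta, fir_delta, fir_delta, if_pos hkT] at hrec
      have hk1 : k - 1 + 1 = k := by omega
      rw [hk1, if_pos (by omega), if_pos (by omega)] at hrec
      have hkne : k ≠ 0 := by omega
      simp only [hkne, if_neg hkne] at hrec
      simpa [Matrix.mulVec_mulVec, Matrix.add_mulVec] using hrec
    · apply mat_ext_of_mulVec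
      intro v
      have hrec := (h (fun s => if s = 0 then v else 0)).2 T hT
      rw [fir_delta, fir_delta, fir_delta, if_neg (by omega)] at hrec
      have hk1 : T - 1 + 1 = T := by omega
      rw [hk1, if_pos le_rfl, if_pos le_rfl] at hrec
      have hkne : T ≠ 0 := by omega
      simp only [if_neg hkne, add_zero] at hrec
      rw [Matrix.mulVec_mulVec, Matrix.mulVec_mulVec] at hrec
      rw [Matrix.add_mulVec, Matrix.zero_mulVec]
      exact hrec.symm
  · rintro ⟨hR1, hrec, hlast⟩ w
    constructor
    · unfold fir
      rw [min_eq_left (by omega : 0 + 1 ≤ T)]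
      simp [hR1]
    · intro t ht
      unfold fir
      have ht1 : t - 1 + 1 = t := by omega
      rw [ht1]
      have hsplit : Finset.Icc 1 (min (t + 1) T) = insert 1 (Finset.Icc 2 (min (t + 1) T)) := by
        ext x
        simp only [Finset.mem_insert, Finset.mem_Icc]
        omega
      rw [hsplit, Finset.sum_insert (by simp)]
      simp only [hR1, Matrix.one_mulVec]
      have hre : ∀ k ∈ Finset.Icc 2 (min (t + 1) T),
          (R k).mulVec (w (t + 1 - k)) =
          A.mulVec ((R (k-1)).mulVec (w (t + 1 - k))) +
            B.mulVec ((M (k-1)).mulVec (w (t + 1 - k))) := by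
        intro k hk
        simp only [Finset.mem_Icc] at hk
        have hk1 : k - 1 + 1 = k := by omega
        have := hrec (k - 1) (by omega) (by omega)
        rw [hk1] at this
        rw [this, Matrix.add_mulVec, Matrix.mulVec_mulVec, Matrix.mulVec_mulVec]
      rw [Finset.sum_congr rfl hre, Finset.sum_add_distrib]
      rw [← mulVec_sum, ← mulVec_sum]
      have key : ∀ (q : ℕ) (S : ℕ → Matrix (Fin q) (Fin n) ℝ),
          (∑ k ∈ Finset.Icc 2 (min (t + 1) T), (S (k-1)).mulVec (w (t + 1 - k))) =
          ∑ j ∈ Finset.Icc 1 (min (t + 1) T - 1), (S j).mulVec (w (t - j)) := by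
        intro q S
        apply Finset.sum_nbij' (fun k => k - 1) (fun j => j + 1)
        · intro k hk; simp only [Finset.mem_Icc] at *; omega
        · intro j hj; simp only [Finset.mem_Icc] at *; omega
        · intro k hk; simp only [Finset.mem_Icc] at hk; omega
        · intro j hj; rfl
        · intro k hk
          simp only [Finset.mem_Icc] at hk
          have h1 : t + 1 - k = t - (k - 1) := by omega
          rw [h1]
      rw [key n R, key m M]
      by_cases hcase : t + 1 ≤ T
      · have e1 : min (t + 1) T - 1 = min t T := by omega
        have e2 : ∀ j, t - 1 + 1 - j = t - j := by intro j; omega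
        simp only [e1, e2, Nat.add_sub_cancel]
        abel
      · have e1 : min (t + 1) T - 1 = T - 1 := by omega
        have e2 : min t T = T := by omega
        have e3 : ∀ j, t - 1 + 1 - j = t - j := by intro j; omega
        simp only [ht1, e1, e2, e3, Nat.add_sub_cancel]
        have hsplit2 : Finset.Icc 1 T = insert T (Finset.Icc 1 (T - 1)) := by
          ext x; simp only [Finset.mem_insert, Finset.mem_Icc]; omega
        rw [hsplit2, Finset.sum_insert (by simp only [Finset.mem_Icc]; omega),
          Finset.sum_insert (by simp only [Finset.mem_Icc]; omega)]
        rw [Matrix.mulVec_add, Matrix.mulVec_add]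
        have hz : A.mulVec ((R T).mulVec (w (t - T))) +
            B.mulVec ((M T).mulVec (w (t - T))) = 0 := by
          rw [Matrix.mulVec_mulVec, Matrix.mulVec_mulVec, ← Matrix.add_mulVec, hlast,
            Matrix.zero_mulVec]
        rw [eq_neg_of_add_eq_zero_left hz]
        abel
end

section
/- Uniform output bound for blended FIR maps (safety sufficiency and no-windup): Let N ≥ 1, levels 0 = η_0 ≤ η_1 ≤ … ≤ η_N, T ≥ 1, and matrices M^i_1, …, M^i_T ∈ ℝ^{m×n} for i = 1, …, N. Let P_η be the saturation projection. Then for EVERY sequence w : ℕ → ℝⁿ (no bound on w required) and every t, |Σ_{i=1}^N Σ_{k=1}^{min(t+1,T)} M^i_k (P_{η_i}(w_{t+1−k}) − P_{η_{i−1}}(w_{t+1−k}))| ≤ Σ_{i=1}^N (η_i − η_{i−1}) ‖[M^i_T M^i_{T−1} ⋯ M^i_1]‖, where |·| is the sup vector norm on ℝᵐ and ‖·‖ is the induced ℓ∞→ℓ∞ norm (maximum absolute row sum) of the row-wise concatenated matrix. In particular, if Σ_{i=1}^N (η_i − η_{i−1}) ‖[M^i_T ⋯ M^i_1]‖ ≤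 u_max, then the blended controller output never exceeds u_max in sup norm for any internal signal. -/
/-- Scalar saturation at level `η`: `sat(a,η) = sign(a)·min(|a|,η)`. -/
noncomputable def satScalar (η a : ℝ) : ℝ := Real.sign a * min |a| η

/-- Coordinatewise saturation projection on `ℝⁿ` (sup norm). -/
noncomputable def satProj {n : ℕ} (η : ℝ) (w : Fin n → ℝ) : Fin n → ℝ :=
  fun i => satScalar η (w i)

/-- Induced ℓ∞→ℓ∞ norm (maximum absolute row sum) of the row-wise
concatenation `[M_T M_{T-1} ⋯ M_1]`. -/
noncomputable def concatNorm {p n : ℕ} (T : ℕ) (M : ℕ → Matrix (Fin p) (Fin n) ℝ) : ℝ :=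
  ⨆ r : Fin p, ∑ k ∈ Finset.Icc 1 T, ∑ j : Fin n, |M k r j|


lemma satScalar_sub_le (a η' η : ℝ) (h0 : 0 ≤ η') (h1 : η' ≤ η) :
    |satScalar η a - satScalar η' a| ≤ η - η' := by
  have hmin1 : min |a| η' ≤ min |a| η := min_le_min le_rfl h1
  have hmin2 : min |a| η - min |a| η' ≤ η - η' := by
    rcases le_total |a| η' with h | h
    · rw [min_eq_left h, min_eq_left (h.trans h1)]; linarith
    · rw [min_eq_right h]
      have := min_le_right |a| η
      linarith
  have hs : |Real.sign a| ≤ 1 := by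
    rcases lt_trichotomy a 0 with h | h | h
    · simp [Real.sign_of_neg h]
    · simp [h]
    · simp [Real.sign_of_pos h]
  calc |satScalar η a - satScalar η' a|
      = |Real.sign a| * |min |a| η - min |a| η'| := by
        rw [satScalar, satScalar, ← mul_sub, abs_mul]
    _ ≤ 1 * |min |a| η - min |a| η'| := by
        apply mul_le_mul_of_nonneg_right hs (abs_nonneg _)
    _ = |min |a| η - min |a| η'| := one_mul _
    _ ≤ η - η' := abs_le.mpr ⟨by linarith, hmin2⟩

/-- Uniform output bound for blended FIR maps (safety
sufficiency and no-windup). For EVERY sequence `w` (no bound required) and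
every `t`, the blended output is bounded in sup norm by
`Σ_{i=1}^N (η_i − η_{i-1}) ‖[M^i_T ⋯ M^i_1]‖`; in particular, if this
quantity is at most `u_max`, the blended controller output never exceeds
`u_max`. -/
theorem blended_output_uniform_bound (n m T N : ℕ) (hT : 1 ≤ T) (hN : 1 ≤ N)
    (η : ℕ → ℝ) (hη0 : η 0 = 0) (hmono : ∀ i : ℕ, i < N → η i ≤ η (i + 1))
    (M : ℕ → ℕ → Matrix (Fin m) (Fin n) ℝ) (umax : ℝ) :
    (∀ (w : ℕ → Fin n → ℝ) (t : ℕ),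
      ‖∑ i ∈ Finset.Icc 1 N, ∑ k ∈ Finset.Icc 1 (min (t + 1) T),
          (M i k).mulVec
            (satProj (η i) (w (t + 1 - k)) - satProj (η (i - 1)) (w (t + 1 - k)))‖ ≤
        ∑ i ∈ Finset.Icc 1 N, (η i - η (i - 1)) * concatNorm T (M i)) ∧
    ((∑ i ∈ Finset.Icc 1 N, (η i - η (i - 1)) * concatNorm T (M i)) ≤ umax →
      ∀ (w : ℕ → Fin n → ℝ) (t : ℕ),
        ‖∑ i ∈ Finset.Icc 1 N, ∑ k ∈ Finset.Icc 1 (min (t + 1) T),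
            (M i k).mulVec
              (satProj (η i) (w (t + 1 - k)) - satProj (η (i - 1)) (w (t + 1 - k)))‖ ≤
          umax) := by
  have hηnn : ∀ j, j ≤ N → 0 ≤ η j := by
    intro j
    induction j with
    | zero => intro _; simp [hη0]
    | succ k ih =>
      intro hj
      exact (ih (by omega)).trans (hmono k (by omega))
  have hstep : ∀ i, 1 ≤ i → i ≤ N → η (i - 1) ≤ η i := by
    intro i h1 h2
    have := hmono (i - 1) (by omega)
    rwa [Nat.sub_add_cancel h1] at this
  have key : ∀ (w : ℕ → Fin n → ℝ) (t : ℕ),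
      ‖∑ i ∈ Finset.Icc 1 N, ∑ k ∈ Finset.Icc 1 (min (t + 1) T),
          (M i k).mulVec
            (satProj (η i) (w (t + 1 - k)) - satProj (η (i - 1)) (w (t + 1 - k)))‖ ≤
        ∑ i ∈ Finset.Icc 1 N, (η i - η (i - 1)) * concatNorm T (M i) := by
    intro w t
    refine (norm_sum_le _ _).trans (Finset.sum_le_sum ?_)
    intro i hi
    obtain ⟨hi1, hi2⟩ := Finset.mem_Icc.mp hi
    set d : ℝ := η i - η (i - 1) with hd
    have hd0 : 0 ≤ d := by
      have := hstep i hi1 hi2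
      simp [hd]; linarith
    have hC : 0 ≤ concatNorm T (M i) := by
      apply Real.iSup_nonneg
      intro r
      exact Finset.sum_nonneg fun k _ => Finset.sum_nonneg fun j _ => abs_nonneg _
    rw [pi_norm_le_iff_of_nonneg (mul_nonneg hd0 hC)]
    intro r
    have hrow : ∀ k ∈ Finset.Icc 1 (min (t + 1) T),
        |((M i k).mulVec
            (satProj (η i) (w (t + 1 - k)) - satProj (η (i - 1)) (w (t + 1 - k)))) r|
          ≤ d * ∑ j : Fin n, |M i k r j| := by
      intro k _
      have : ((M i k).mulVec
          (satProj (η i) (w (t + 1 - k)) - satProj (η (i - 1)) (w (t + 1 - k)))) r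
          = ∑ j : Fin n, M i k r j *
            (satScalar (η i) (w (t + 1 - k) j) - satScalar (η (i - 1)) (w (t + 1 - k) j)) := by
        simp [Matrix.mulVec, dotProduct, satProj]
      rw [this, Finset.mul_sum]
      refine (Finset.abs_sum_le_sum_abs _ _).trans (Finset.sum_le_sum ?_)
      intro j _
      rw [abs_mul, mul_comm d]
      apply mul_le_mul_of_nonneg_left _ (abs_nonneg _)
      exact satScalar_sub_le _ _ _ (hηnn (i - 1) (by omega)) (hstep i hi1 hi2)
    calc ‖(∑ k ∈ Finset.Icc 1 (min (t + 1) T),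
          (M i k).mulVec
            (satProj (η i) (w (t + 1 - k)) - satProj (η (i - 1)) (w (t + 1 - k)))) r‖
        = |∑ k ∈ Finset.Icc 1 (min (t + 1) T),
            ((M i k).mulVec
              (satProj (η i) (w (t + 1 - k)) - satProj (η (i - 1)) (w (t + 1 - k)))) r| := by
          rw [Finset.sum_apply]; rfl
      _ ≤ ∑ k ∈ Finset.Icc 1 (min (t + 1) T),
            |((M i k).mulVec
              (satProj (η i) (w (t + 1 - k)) - satProj (η (i - 1)) (w (t + 1 - k)))) r| :=
          Finset.abs_sum_le_sum_abs _ _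
      _ ≤ ∑ k ∈ Finset.Icc 1 (min (t + 1) T), d * ∑ j : Fin n, |M i k r j| :=
          Finset.sum_le_sum hrow
      _ = d * ∑ k ∈ Finset.Icc 1 (min (t + 1) T), ∑ j : Fin n, |M i k r j| := by
          rw [Finset.mul_sum]
      _ ≤ d * ∑ k ∈ Finset.Icc 1 T, ∑ j : Fin n, |M i k r j| := by
          apply mul_le_mul_of_nonneg_left _ hd0
          apply Finset.sum_le_sum_of_subset_of_nonneg
          · exact Finset.Icc_subset_Icc le_rfl (min_le_right _ _)
          · intro k _ _
            exact Finset.sum_nonneg fun j _ => abs_nonneg _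
      _ ≤ d * concatNorm T (M i) := by
          apply mul_le_mul_of_nonneg_left _ hd0
          rw [concatNorm]
          exact le_ciSup (Set.Finite.bddAbove (Set.finite_range
            (fun r : Fin m => ∑ k ∈ Finset.Icc 1 T, ∑ j : Fin n, |M i k r j|))) r
  exact ⟨key, fun h w t => (key w t).trans h⟩
end

section
/- Theorem V.2 (the nonlinear blend relaxation never does worse than the best linear controller): Fix A ∈ ℝ^{n×n}, B ∈ ℝ^{n×m}, horizon T ≥ 1, levels 0 ≤ η_1 ≤ η_2 with η_2 > 0, bounds x_max, u_max > 0, symmetric positive semidefinite Q ∈ ℝ^{n×n}, P ∈ ℝ^{m×m}, and a real random variable w with |w| ≤ η_2 almost surely, E[w] = 0 and E[w²] = σ². Let s_η(a) = sign(a)min(|a|,η) and set α_1 = E[s_{η_1}(w)²], α_2 = E[s_{η_1}(w)(s_{η_2}(w) − s_{η_1}(w))], α_3 = E[(s_{η_2}(w) − s_{η_1}(w))²]. For concatenations R = [R_T ⋯ R_1], M = [M_T ⋯ M_1], call a 4-tuple (R¹, R², M¹, M²) blend-feasible if (Rⁱ, Mⁱ) satisfies the SLS feasibility conditions for (A,B)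 with horizon T for i = 1,2, η_1‖R¹‖ + (η_2 − η_1)‖R²‖ ≤ x_max and η_1‖M¹‖ + (η_2 − η_1)‖M²‖ ≤ u_max, and define its cost as tr([R¹ R²] Σ_w [R¹ R²]ᵀ Q) + tr([M¹ M²] Σ_w [M¹ M²]ᵀ P), where Σ_w is the 2×2 block matrix with blocks α_1 I, α_2 I; α_2 I, α_3 I (identity of size nT). Then: (a) α_1 + 2α_2 + α_3 = σ²; (b) for any (R, M) satisfying the SLS feasibility conditions with η_2‖R‖ ≤ x_max and η_2‖M‖ ≤ u_max, the tuple (R, R, M, M) is blend-feasible and its cost equals σ²(tr(R Rᵀ Q) + tr(M Mᵀ P)); consequently (c) the infimum of the cost over all blend-feasible tuples is at most σ²(tr(R Rᵀ Q) + tr(M Mᵀ P)) for every such linear pair (R, M). -/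
open MeasureTheory Matrix

/-- SLS feasibility conditions for `(A, B)` with horizon `T`. -/
def SLSFeasible {n m : ℕ} (A : Matrix (Fin n) (Fin n) ℝ) (B : Matrix (Fin n) (Fin m) ℝ)
    (T : ℕ) (R : ℕ → Matrix (Fin n) (Fin n) ℝ) (M : ℕ → Matrix (Fin m) (Fin n) ℝ) : Prop :=
  R 1 = 1 ∧
  (∀ k : ℕ, 1 ≤ k → k + 1 ≤ T → R (k + 1) = A * R k + B * M k) ∧
  A * R T + B * M T = 0

/-- Row-wise concatenation `[M_T ⋯ M_1]` as a `p × (T·n)` matrix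
(column index `(k, j)` addresses the `j`-th column of `M_{k+1}`). -/
noncomputable def concat1 {p n : ℕ} (T : ℕ) (M : ℕ → Matrix (Fin p) (Fin n) ℝ) :
    Matrix (Fin p) (Fin T × Fin n) ℝ :=
  fun r c => M (c.1 + 1) r c.2

/-- Two-block row-wise concatenation `[M¹ M²]` of the concatenations of two
FIR families, as a `p × (2·T·n)` matrix. -/
noncomputable def concat2 {p n : ℕ} (T : ℕ) (M1 M2 : ℕ → Matrix (Fin p) (Fin n) ℝ) :
    Matrix (Fin p) (Fin 2 × Fin T × Fin n) ℝ :=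
  fun r c => (if c.1 = 0 then M1 else M2) (c.2.1 + 1) r c.2.2

/-- The 2×2-block matrix `Σ_w` with blocks `α₁ I, α₂ I; α₂ I, α₃ I`
(identity of size `T·n`). -/
noncomputable def Sigw (n T : ℕ) (α₁ α₂ α₃ : ℝ) :
    Matrix (Fin 2 × Fin T × Fin n) (Fin 2 × Fin T × Fin n) ℝ :=
  fun x y => if x.2 = y.2 then !![α₁, α₂; α₂, α₃] x.1 y.1 else 0

/-- Blend feasibility: both `(Rⁱ, Mⁱ)` satisfy the SLS feasibility conditions
and the two safety bounds `η₁‖R¹‖ + (η₂−η₁)‖R²‖ ≤ x_max`,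
`η₁‖M¹‖ + (η₂−η₁)‖M²‖ ≤ u_max` hold. -/
def BlendFeasible {n m : ℕ} (A : Matrix (Fin n) (Fin n) ℝ) (B : Matrix (Fin n) (Fin m) ℝ)
    (T : ℕ) (η₁ η₂ xmax umax : ℝ)
    (R1 R2 : ℕ → Matrix (Fin n) (Fin n) ℝ) (M1 M2 : ℕ → Matrix (Fin m) (Fin n) ℝ) : Prop :=
  SLSFeasible A B T R1 M1 ∧ SLSFeasible A B T R2 M2 ∧
  η₁ * concatNorm T R1 + (η₂ - η₁) * concatNorm T R2 ≤ xmax ∧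
  η₁ * concatNorm T M1 + (η₂ - η₁) * concatNorm T M2 ≤ umax

/-- The cost `tr([R¹ R²] Σ_w [R¹ R²]ᵀ Q) + tr([M¹ M²] Σ_w [M¹ M²]ᵀ P)`. -/
noncomputable def blendCost {n m : ℕ} (T : ℕ)
    (Q : Matrix (Fin n) (Fin n) ℝ) (P : Matrix (Fin m) (Fin m) ℝ) (α₁ α₂ α₃ : ℝ)
    (R1 R2 : ℕ → Matrix (Fin n) (Fin n) ℝ) (M1 M2 : ℕ → Matrix (Fin m) (Fin n) ℝ) : ℝ :=
  Matrix.trace (concat2 T R1 R2 * Sigw n T α₁ α₂ α₃ * (concat2 T R1 R2)ᵀ * Q) +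
  Matrix.trace (concat2 T M1 M2 * Sigw n T α₁ α₂ α₃ * (concat2 T M1 M2)ᵀ * P)


section Helpers

open MeasureTheory Matrix

lemma key_blend {p n : ℕ} (T : ℕ) (X : ℕ → Matrix (Fin p) (Fin n) ℝ) (α₁ α₂ α₃ : ℝ) :
    concat2 T X X * Sigw n T α₁ α₂ α₃ * (concat2 T X X)ᵀ
      = (α₁ + 2*α₂ + α₃) • (concat1 T X * (concat1 T X)ᵀ) := by
  ext r r'
  simp only [Matrix.mul_apply, Matrix.smul_apply, Matrix.transpose_apply, concat2, concat1,
    Sigw, smul_eq_mul, Fintype.sum_prod_type, Fin.sum_univ_two]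
  simp [mul_ite, ite_mul, mul_zero, zero_mul, Finset.sum_ite_eq, Finset.sum_ite_eq',
    Finset.mul_sum, Finset.sum_mul, ite_and, Matrix.cons_val_zero, Matrix.cons_val_one]
  rw [← Finset.sum_add_distrib]
  refine Finset.sum_congr rfl fun z _ => ?_
  rw [← Finset.sum_add_distrib]
  exact Finset.sum_congr rfl fun x _ => by ring

lemma diag_sig {p n T : ℕ} (α₁ α₂ α₃ : ℝ)
    (D : Matrix (Fin p) (Fin 2 × Fin T × Fin n) ℝ) (r : Fin p) :
    (D * Sigw n T α₁ α₂ α₃ * Dᵀ) r r =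
      ∑ z : Fin T × Fin n,
        ((D r (0, z))^2 * α₁ + (2 * (D r (0, z) * D r (1, z))) * α₂ + (D r (1, z))^2 * α₃) := by
  simp only [Matrix.mul_apply, Matrix.transpose_apply, Sigw, Fintype.sum_prod_type,
    Fin.sum_univ_two]
  simp [mul_ite, ite_mul, mul_zero, zero_mul, Finset.sum_ite_eq, Finset.sum_ite_eq', ite_and,
    Finset.mul_sum, Finset.sum_mul, Fintype.sum_prod_type]
  rw [← Finset.sum_add_distrib]
  exact Finset.sum_congr rfl fun z _ => by
    rw [← Finset.sum_add_distrib]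
    exact Finset.sum_congr rfl fun x _ => by ring

lemma trace_sig_nonneg {p n T : ℕ} (α₁ α₂ α₃ : ℝ)
    (hq : ∀ a b : ℝ, 0 ≤ a^2 * α₁ + (2 * (a * b)) * α₂ + b^2 * α₃)
    (C : Matrix (Fin p) (Fin 2 × Fin T × Fin n) ℝ) {Q : Matrix (Fin p) (Fin p) ℝ}
    (hQ : Q.PosSemidef) :
    0 ≤ Matrix.trace (C * Sigw n T α₁ α₂ α₃ * Cᵀ * Q) := by
  obtain ⟨L, hL⟩ : ∃ L : Matrix (Fin p) (Fin p) ℝ, Q = Lᴴ * L := by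
    classical
    open scoped MatrixOrder in
    obtain ⟨X, hX, -, hXX⟩ := CFC.exists_sqrt_of_isSelfAdjoint_of_quasispectrumRestricts
      hQ.isHermitian (QuasispectrumRestricts.nnreal_of_nonneg hQ.nonneg)
    exact ⟨X, by rw [← hXX, ← Matrix.star_eq_conjTranspose, hX.star_eq]⟩
  have hE : C * Sigw n T α₁ α₂ α₃ * Cᵀ * Q =
      Cᵀᵀ * (Sigw n T α₁ α₂ α₃ * (Cᵀ * Lᴴ)) * L := by
    rw [hL, Matrix.transpose_transpose]
    simp only [Matrix.mul_assoc]
  rw [hE, Matrix.trace_mul_cycle]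
  have hD : L * Cᵀᵀ * (Sigw n T α₁ α₂ α₃ * (Cᵀ * Lᴴ)) =
      (L * C) * Sigw n T α₁ α₂ α₃ * (L * C)ᵀ := by
    rw [Matrix.transpose_mul, Matrix.conjTranspose_eq_transpose_of_trivial,
      Matrix.transpose_transpose]
    simp only [Matrix.mul_assoc]
  rw [hD, Matrix.trace]
  refine Finset.sum_nonneg fun r _ => ?_
  rw [Matrix.diag_apply, diag_sig]
  exact Finset.sum_nonneg fun z _ => hq _ _

lemma satScalar_abs_le {η : ℝ} (hη : 0 ≤ η) (a : ℝ) : |satScalar η a| ≤ η := by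
  rw [satScalar, abs_mul]
  have h1 : |Real.sign a| ≤ 1 := by
    rcases Real.sign_apply_eq a with h | h | h <;> simp [h]
  have h2 : |min |a| η| ≤ η := by
    rw [abs_of_nonneg (le_min (abs_nonneg a) hη)]
    exact min_le_right _ _
  calc |Real.sign a| * |min |a| η| ≤ 1 * η :=
        mul_le_mul h1 h2 (abs_nonneg _) zero_le_one
    _ = η := one_mul η

lemma satScalar_eq_self {η a : ℝ} (h : |a| ≤ η) : satScalar η a = a := by
  rw [satScalar, min_eq_left h]
  rcases lt_trichotomy a 0 with ha | ha | ha
  · rw [Real.sign_of_neg ha, abs_of_neg ha]; ring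
  · simp [ha]
  · rw [Real.sign_of_pos ha, abs_of_pos ha]; ring

lemma measurable_satScalar (η : ℝ) : Measurable (satScalar η) := by
  apply Measurable.mul
  · unfold Real.sign
    exact Measurable.ite (measurableSet_lt measurable_id measurable_const) measurable_const
      (Measurable.ite (measurableSet_lt measurable_const measurable_id) measurable_const
        measurable_const)
  · exact (measurable_id.abs).min measurable_const

lemma integrable_of_bdd {Ω : Type*} [MeasurableSpace Ω] {μ : MeasureTheory.Measure Ω}
    [MeasureTheory.IsProbabilityMeasure μ] {f : Ω → ℝ} (hm : Measurable f) (C : ℝ)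
    (h : ∀ ω, |f ω| ≤ C) : MeasureTheory.Integrable f μ :=
  (MeasureTheory.integrable_const C).mono' hm.aestronglyMeasurable
    (Filter.Eventually.of_forall fun ω => by simpa [Real.norm_eq_abs] using h ω)

end Helpers

/-- Theorem V.2 — the nonlinear blend relaxation never does
worse than the best linear controller. With
`α₁ = E[s_{η₁}(w)²]`, `α₂ = E[s_{η₁}(w)(s_{η₂}(w) − s_{η₁}(w))]`,
`α₃ = E[(s_{η₂}(w) − s_{η₁}(w))²]` for a centered random variable `w` with
`|w| ≤ η₂` a.s. and variance `σ²`: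
(a) `α₁ + 2α₂ + α₃ = σ²`;
(b) any SLS-feasible linear pair `(R, M)` with `η₂‖R‖ ≤ x_max`,
`η₂‖M‖ ≤ u_max` yields a blend-feasible tuple `(R, R, M, M)` whose cost is
`σ²(tr(R Rᵀ Q) + tr(M Mᵀ P))`;
(c) consequently the infimum of the cost over blend-feasible tuples is at most
`σ²(tr(R Rᵀ Q) + tr(M Mᵀ P))` for every such linear pair. -/
theorem blend_relaxation_beats_linear (n m T : ℕ) (hT : 1 ≤ T)
    (A : Matrix (Fin n) (Fin n) ℝ) (B : Matrix (Fin n) (Fin m) ℝ)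
    (η₁ η₂ : ℝ) (hη1 : 0 ≤ η₁) (hη12 : η₁ ≤ η₂) (hη2 : 0 < η₂)
    (xmax umax : ℝ) (hxmax : 0 < xmax) (humax : 0 < umax)
    (Q : Matrix (Fin n) (Fin n) ℝ) (P : Matrix (Fin m) (Fin m) ℝ)
    (hQ : Q.PosSemidef) (hP : P.PosSemidef)
    {Ω : Type*} [MeasurableSpace Ω] (μ : Measure Ω) [IsProbabilityMeasure μ]
    (w : Ω → ℝ) (hwmeas : Measurable w) (hwbdd : ∀ᵐ ω ∂μ, |w ω| ≤ η₂)
    (σ : ℝ) (hmean : ∫ ω, w ω ∂μ = 0) (hvar : ∫ ω, (w ω) ^ 2 ∂μ = σ ^ 2)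
    (α₁ α₂ α₃ : ℝ)
    (hα₁ : α₁ = ∫ ω, (satScalar η₁ (w ω)) ^ 2 ∂μ)
    (hα₂ : α₂ = ∫ ω, satScalar η₁ (w ω) * (satScalar η₂ (w ω) - satScalar η₁ (w ω)) ∂μ)
    (hα₃ : α₃ = ∫ ω, (satScalar η₂ (w ω) - satScalar η₁ (w ω)) ^ 2 ∂μ) :
    (α₁ + 2 * α₂ + α₃ = σ ^ 2) ∧
    (∀ (R : ℕ → Matrix (Fin n) (Fin n) ℝ) (M : ℕ → Matrix (Fin m) (Fin n) ℝ),
      SLSFeasible A B T R M →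
      η₂ * concatNorm T R ≤ xmax → η₂ * concatNorm T M ≤ umax →
      BlendFeasible A B T η₁ η₂ xmax umax R R M M ∧
      blendCost T Q P α₁ α₂ α₃ R R M M =
        σ ^ 2 * (Matrix.trace (concat1 T R * (concat1 T R)ᵀ * Q) +
                 Matrix.trace (concat1 T M * (concat1 T M)ᵀ * P))) ∧
    (∀ (R : ℕ → Matrix (Fin n) (Fin n) ℝ) (M : ℕ → Matrix (Fin m) (Fin n) ℝ),
      SLSFeasible A B T R M →
      η₂ * concatNorm T R ≤ xmax → η₂ * concatNorm T M ≤ umax →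
      sInf {c : ℝ | ∃ (R1 R2 : ℕ → Matrix (Fin n) (Fin n) ℝ)
          (M1 M2 : ℕ → Matrix (Fin m) (Fin n) ℝ),
          BlendFeasible A B T η₁ η₂ xmax umax R1 R2 M1 M2 ∧
          c = blendCost T Q P α₁ α₂ α₃ R1 R2 M1 M2} ≤
        σ ^ 2 * (Matrix.trace (concat1 T R * (concat1 T R)ᵀ * Q) +
                 Matrix.trace (concat1 T M * (concat1 T M)ᵀ * P))) := by
  -- basic measurability and bounds
  have hη2' : (0:ℝ) ≤ η₂ := hη2.le
  have hFm : Measurable (fun ω => satScalar η₁ (w ω)) := (measurable_satScalar η₁).comp hwmeas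
  have hGm : Measurable (fun ω => satScalar η₂ (w ω) - satScalar η₁ (w ω)) :=
    ((measurable_satScalar η₂).comp hwmeas).sub hFm
  have hFb : ∀ ω, |satScalar η₁ (w ω)| ≤ η₁ := fun ω => satScalar_abs_le hη1 _
  have hGb : ∀ ω, |satScalar η₂ (w ω) - satScalar η₁ (w ω)| ≤ η₂ + η₁ := fun ω =>
    (abs_sub _ _).trans (add_le_add (satScalar_abs_le hη2' _) (satScalar_abs_le hη1 _))
  have i1 : Integrable (fun ω => satScalar η₁ (w ω) ^ 2) μ := by
    refine integrable_of_bdd (hFm.pow_const 2) (η₁ ^ 2) fun ω => ?_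
    rw [abs_pow]
    exact pow_le_pow_left₀ (abs_nonneg _) (hFb ω) 2
  have i2 : Integrable
      (fun ω => satScalar η₁ (w ω) * (satScalar η₂ (w ω) - satScalar η₁ (w ω))) μ := by
    refine integrable_of_bdd (hFm.mul hGm) (η₁ * (η₂ + η₁)) fun ω => ?_
    rw [abs_mul]
    exact mul_le_mul (hFb ω) (hGb ω) (abs_nonneg _) hη1
  have i3 : Integrable (fun ω => (satScalar η₂ (w ω) - satScalar η₁ (w ω)) ^ 2) μ := by
    refine integrable_of_bdd (hGm.pow_const 2) ((η₂ + η₁) ^ 2) fun ω => ?_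
    rw [abs_pow]
    exact pow_le_pow_left₀ (abs_nonneg _) (hGb ω) 2
  -- part (a)
  have ha : α₁ + 2 * α₂ + α₃ = σ ^ 2 := by
    have hsplit : ∫ ω, (satScalar η₁ (w ω) ^ 2 +
          2 * (satScalar η₁ (w ω) * (satScalar η₂ (w ω) - satScalar η₁ (w ω))) +
          (satScalar η₂ (w ω) - satScalar η₁ (w ω)) ^ 2) ∂μ
        = (∫ ω, satScalar η₁ (w ω) ^ 2 ∂μ) +
          2 * (∫ ω, satScalar η₁ (w ω) * (satScalar η₂ (w ω) - satScalar η₁ (w ω)) ∂μ) +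
          ∫ ω, (satScalar η₂ (w ω) - satScalar η₁ (w ω)) ^ 2 ∂μ := by
      have i12 : Integrable (fun ω => satScalar η₁ (w ω) ^ 2 +
          2 * (satScalar η₁ (w ω) * (satScalar η₂ (w ω) - satScalar η₁ (w ω)))) μ :=
        i1.add (i2.const_mul 2)
      rw [integral_add i12 i3, integral_add i1 (i2.const_mul 2), integral_const_mul]
    rw [hα₁, hα₂, hα₃, ← hvar, ← hsplit]
    refine integral_congr_ae (hwbdd.mono fun ω h => ?_)
    have h2 : satScalar η₂ (w ω) = w ω := satScalar_eq_self h
    beta_reduce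
    rw [h2]; ring
  -- the quadratic form is nonnegative
  have hq : ∀ a b : ℝ, 0 ≤ a^2 * α₁ + (2 * (a * b)) * α₂ + b^2 * α₃ := by
    intro a b
    have hsplit : ∫ ω, (a ^ 2 * satScalar η₁ (w ω) ^ 2 +
          2 * (a * b) * (satScalar η₁ (w ω) * (satScalar η₂ (w ω) - satScalar η₁ (w ω))) +
          b ^ 2 * (satScalar η₂ (w ω) - satScalar η₁ (w ω)) ^ 2) ∂μ
        = a ^ 2 * (∫ ω, satScalar η₁ (w ω) ^ 2 ∂μ) +
          2 * (a * b) * (∫ ω, satScalar η₁ (w ω) * (satScalar η₂ (w ω) - satScalar η₁ (w ω)) ∂μ) +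
          b ^ 2 * ∫ ω, (satScalar η₂ (w ω) - satScalar η₁ (w ω)) ^ 2 ∂μ := by
      have j1 : Integrable (fun ω => a ^ 2 * satScalar η₁ (w ω) ^ 2) μ := i1.const_mul _
      have j2 : Integrable (fun ω => 2 * (a * b) *
          (satScalar η₁ (w ω) * (satScalar η₂ (w ω) - satScalar η₁ (w ω)))) μ := i2.const_mul _
      have j3 : Integrable
          (fun ω => b ^ 2 * (satScalar η₂ (w ω) - satScalar η₁ (w ω)) ^ 2) μ := i3.const_mul _
      have j12 : Integrable (fun ω => a ^ 2 * satScalar η₁ (w ω) ^ 2 + 2 * (a * b) *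
          (satScalar η₁ (w ω) * (satScalar η₂ (w ω) - satScalar η₁ (w ω)))) μ := j1.add j2
      rw [integral_add j12 j3, integral_add j1 j2,
        integral_const_mul, integral_const_mul, integral_const_mul]
    have hkey : a ^ 2 * α₁ + (2 * (a * b)) * α₂ + b ^ 2 * α₃ =
        ∫ ω, (a * satScalar η₁ (w ω) +
          b * (satScalar η₂ (w ω) - satScalar η₁ (w ω))) ^ 2 ∂μ := by
      rw [hα₁, hα₂, hα₃, ← hsplit]
      exact integral_congr_ae (Filter.Eventually.of_forall fun ω => by ring)
    rw [hkey]
    exact integral_nonneg fun ω => sq_nonneg _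
  -- part (b)
  have hb : ∀ (R : ℕ → Matrix (Fin n) (Fin n) ℝ) (M : ℕ → Matrix (Fin m) (Fin n) ℝ),
      SLSFeasible A B T R M →
      η₂ * concatNorm T R ≤ xmax → η₂ * concatNorm T M ≤ umax →
      BlendFeasible A B T η₁ η₂ xmax umax R R M M ∧
      blendCost T Q P α₁ α₂ α₃ R R M M =
        σ ^ 2 * (Matrix.trace (concat1 T R * (concat1 T R)ᵀ * Q) +
                 Matrix.trace (concat1 T M * (concat1 T M)ᵀ * P)) := by
    intro R M hSLS hxR hxM
    constructor
    · refine ⟨hSLS, hSLS, ?_, ?_⟩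
      · calc η₁ * concatNorm T R + (η₂ - η₁) * concatNorm T R
            = η₂ * concatNorm T R := by ring
          _ ≤ xmax := hxR
      · calc η₁ * concatNorm T M + (η₂ - η₁) * concatNorm T M
            = η₂ * concatNorm T M := by ring
          _ ≤ umax := hxM
    · rw [blendCost, key_blend, key_blend, Matrix.smul_mul, Matrix.smul_mul,
        Matrix.trace_smul, Matrix.trace_smul, ha, smul_eq_mul, smul_eq_mul]
      ring
  refine ⟨ha, hb, ?_⟩
  -- part (c)
  intro R M hSLS hxR hxM
  obtain ⟨hbf, hcost⟩ := hb R M hSLS hxR hxM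
  have hbdd : BddBelow {c : ℝ | ∃ (R1 R2 : ℕ → Matrix (Fin n) (Fin n) ℝ)
      (M1 M2 : ℕ → Matrix (Fin m) (Fin n) ℝ),
      BlendFeasible A B T η₁ η₂ xmax umax R1 R2 M1 M2 ∧
      c = blendCost T Q P α₁ α₂ α₃ R1 R2 M1 M2} := by
    refine ⟨0, ?_⟩
    rintro c ⟨R1, R2, M1, M2, hf, rfl⟩
    exact add_nonneg (trace_sig_nonneg α₁ α₂ α₃ hq _ hQ) (trace_sig_nonneg α₁ α₂ α₃ hq _ hP)
  rw [← hcost]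
  exact csInf_le hbdd ⟨R, R, M, M, hbf, rfl⟩
end

section
/- Lemma VI.1 (ℓ∞ bound for the saturated internal dynamics): Let A ∈ ℝ^{n×n}, τ ∈ ℕ, and suppose ‖A^{τ+1}‖ < 1 where ‖·‖ is the induced ℓ∞→ℓ∞ matrix norm. Let η ≥ 0 and let P_η be the saturation projection on ℝⁿ. Suppose the sequences ŵ, w : ℕ → ℝⁿ satisfy ŵ_t = w_t for 0 ≤ t < τ and ŵ_t = A^{τ+1}(ŵ_{t−τ} − P_η(ŵ_{t−τ})) + w_t for t ≥ τ. Then for every w with sup_t |w_t| < ∞ one has sup_t |ŵ_t| ≤ (1/(1 − ‖A^{τ+1}‖))·sup_t |w_t|, where |·| is the sup vector norm on ℝⁿ. -/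
/-- Induced ℓ∞→ℓ∞ matrix norm (maximum absolute row sum). -/
noncomputable def linftyNorm {n m : ℕ} (A : Matrix (Fin n) (Fin m) ℝ) : ℝ :=
  ⨆ i : Fin n, ∑ j : Fin m, |A i j|

lemma linftyNorm_nonneg {n m : ℕ} (A : Matrix (Fin n) (Fin m) ℝ) :
    0 ≤ linftyNorm A :=
  Real.iSup_nonneg fun i => Finset.sum_nonneg fun j _ => abs_nonneg _

lemma rowsum_le_linftyNorm {n m : ℕ} (A : Matrix (Fin n) (Fin m) ℝ) (i : Fin n) :
    ∑ j, |A i j| ≤ linftyNorm A := by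
  unfold linftyNorm
  exact le_ciSup (Set.Finite.bddAbove (Set.finite_range (fun i : Fin n => ∑ j, |A i j|))) i

lemma mulVec_norm_le {n : ℕ} (A : Matrix (Fin n) (Fin n) ℝ) (v : Fin n → ℝ) :
    ‖A.mulVec v‖ ≤ linftyNorm A * ‖v‖ := by
  rw [pi_norm_le_iff_of_nonneg (mul_nonneg (linftyNorm_nonneg A) (norm_nonneg v))]
  intro i
  have : A.mulVec v i = ∑ j, A i j * v j := rfl
  rw [Real.norm_eq_abs, this]
  calc |∑ j, A i j * v j| ≤ ∑ j, |A i j * v j| := Finset.abs_sum_le_sum_abs _ _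
    _ = ∑ j, |A i j| * |v j| := by simp [abs_mul]
    _ ≤ ∑ j, |A i j| * ‖v‖ := by
        apply Finset.sum_le_sum
        intro j _
        exact mul_le_mul_of_nonneg_left
          (by rw [← Real.norm_eq_abs]; exact norm_le_pi_norm v j) (abs_nonneg _)
    _ = (∑ j, |A i j|) * ‖v‖ := by rw [Finset.sum_mul]
    _ ≤ linftyNorm A * ‖v‖ :=
        mul_le_mul_of_nonneg_right (rowsum_le_linftyNorm A i) (norm_nonneg v)

lemma abs_sub_satScalar_le (η a : ℝ) (hη : 0 ≤ η) : |a - satScalar η a| ≤ |a| := by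
  unfold satScalar
  rcases lt_trichotomy a 0 with h | h | h
  · rw [Real.sign_of_neg h, abs_of_neg h]
    have h1 : min (-a) η ≤ -a := min_le_left _ _
    have h2 : 0 ≤ min (-a) η := le_min (by linarith) hη
    exact abs_le.mpr ⟨by linarith, by linarith⟩
  · simp [h]
  · rw [Real.sign_of_pos h, abs_of_pos h, one_mul]
    have h1 : min a η ≤ a := min_le_left _ _
    have h2 : 0 ≤ min a η := le_min (le_of_lt h) hη
    exact abs_le.mpr ⟨by linarith, by linarith⟩

lemma sub_satProj_norm_le {n : ℕ} (η : ℝ) (hη : 0 ≤ η) (v : Fin n → ℝ) :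
    ‖v - satProj η v‖ ≤ ‖v‖ := by
  rw [pi_norm_le_iff_of_nonneg (norm_nonneg v)]
  intro i
  have : (v - satProj η v) i = v i - satScalar η (v i) := rfl
  rw [Real.norm_eq_abs, this]
  exact le_trans (abs_sub_satScalar_le η (v i) hη)
    (by rw [← Real.norm_eq_abs]; exact norm_le_pi_norm v i)

/-- Lemma VI.1 — ℓ∞ bound for the saturated internal dynamics.
If `‖A^{τ+1}‖ < 1` (induced ℓ∞→ℓ∞ norm) and the sequences `ŵ, w` satisfy
`ŵ_t = w_t` for `t < τ` and
`ŵ_t = A^{τ+1}(ŵ_{t−τ} − P_η(ŵ_{t−τ})) + w_t` for `t ≥ τ`, then for every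
bounded `w`, `sup_t ‖ŵ_t‖ ≤ (1/(1 − ‖A^{τ+1}‖))·sup_t ‖w_t‖`. -/
theorem saturated_internal_dynamics_bound (n : ℕ)
    (A : Matrix (Fin n) (Fin n) ℝ) (τ : ℕ)
    (hA : linftyNorm (A ^ (τ + 1)) < 1)
    (η : ℝ) (hη : 0 ≤ η)
    (wHat w : ℕ → Fin n → ℝ)
    (hsmall : ∀ t : ℕ, t < τ → wHat t = w t)
    (hrec : ∀ t : ℕ, τ ≤ t →
      wHat t = (A ^ (τ + 1)).mulVec (wHat (t - τ) - satProj η (wHat (t - τ))) + w t)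
    (hbdd : BddAbove (Set.range fun t => ‖w t‖)) :
    ∀ t : ℕ, ‖wHat t‖ ≤ (1 / (1 - linftyNorm (A ^ (τ + 1)))) * ⨆ s : ℕ, ‖w s‖ := by

  set c := linftyNorm (A ^ (τ + 1)) with hc
  have hc0 : 0 ≤ c := linftyNorm_nonneg _
  have hpos : (0 : ℝ) < 1 - c := by linarith
  set W := ⨆ s : ℕ, ‖w s‖ with hWdef
  have hW : ∀ t : ℕ, ‖w t‖ ≤ W := fun t => le_ciSup hbdd t
  have hW0 : 0 ≤ W := le_trans (norm_nonneg _) (hW 0)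
  intro t
  induction t using Nat.strong_induction_on with
  | _ t ih =>
    rcases lt_or_ge t τ with ht | ht
    · rw [hsmall t ht]
      have h1 : W ≤ (1 / (1 - c)) * W := by
        rw [one_div, ← div_eq_inv_mul, le_div_iff₀ hpos]
        nlinarith
      exact le_trans (hW t) h1
    · have key : ‖wHat t‖ ≤ c * ‖wHat (t - τ)‖ + W := by
        rw [hrec t ht]
        calc ‖(A ^ (τ + 1)).mulVec (wHat (t - τ) - satProj η (wHat (t - τ))) + w t‖
            ≤ ‖(A ^ (τ + 1)).mulVec (wHat (t - τ) - satProj η (wHat (t - τ)))‖ + ‖w t‖ :=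
              norm_add_le _ _
          _ ≤ c * ‖wHat (t - τ) - satProj η (wHat (t - τ))‖ + W :=
              add_le_add (mulVec_norm_le _ _) (hW t)
          _ ≤ c * ‖wHat (t - τ)‖ + W := by
              have := sub_satProj_norm_le η hη (wHat (t - τ))
              nlinarith
      rcases Nat.eq_zero_or_pos τ with hτ | hτ
      · subst hτ
        simp only [Nat.sub_zero] at key
        rw [one_div, ← div_eq_inv_mul, le_div_iff₀ hpos]
        nlinarith
      · have hlt : t - τ < t := by omega
        have ihv := ih (t - τ) hlt
        rw [one_div, ← div_eq_inv_mul, le_div_iff₀ hpos]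
        have hnn : 0 ≤ ‖wHat (t - τ)‖ := norm_nonneg _
        rw [one_div, ← div_eq_inv_mul, le_div_iff₀ hpos] at ihv
        nlinarith
end

section
/- Small-gain theorem for strictly causal operators (Theorem A.1): Let Δ be a strictly causal operator on ℝⁿ-valued sequences, i.e., a family of functions Δ_t : (ℝⁿ)^t → ℝⁿ acting by Δ(x)_0 = 0 and Δ(x)_t = Δ_t(x_{t−1}, …, x_0). Then: (a) for every sequence w : ℕ → ℝⁿ there exists a unique sequence ŵ with ŵ_t = Δ(ŵ)_t + w_t for all t; and (b) if p ∈ [1, ∞] and there exist 0 ≤ γ < 1 and β ≥ 0 such that ‖Δ(x)‖_p ≤ γ‖x‖_p + β for every sequence x with ‖x‖_p < ∞, then for every w with ‖w‖_p < ∞ the unique solution ŵ satisfies ‖ŵ‖_p ≤ (‖w‖_p + β)/(1 − γ). Here ‖x‖_p = (Σ_t |x_t|^p)^{1/p} for p < ∞ and ‖x‖_∞ = sup_t |x_t|, with |·| the sup vector norm on ℝⁿ. -/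
open scoped ENNReal NNReal

/-- The ℓ_p norm (valued in `ℝ≥0∞`) of a sequence of vectors in `ℝⁿ`
(each vector carrying the sup norm):
`‖x‖_p = (Σ_t |x_t|^p)^{1/p}` for `p < ∞` and `‖x‖_∞ = sup_t |x_t|`. -/
noncomputable def lpSeqNorm (n : ℕ) (p : ℝ≥0∞) (x : ℕ → Fin n → ℝ) : ℝ≥0∞ :=
  if p = ∞ then ⨆ t : ℕ, (‖x t‖₊ : ℝ≥0∞)
  else (∑' t : ℕ, (‖x t‖₊ : ℝ≥0∞) ^ p.toReal) ^ (1 / p.toReal)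

lemma lpSeqNorm_mono {n : ℕ} {p : ℝ≥0∞} {x y : ℕ → Fin n → ℝ}
    (h : ∀ t, ‖x t‖₊ ≤ ‖y t‖₊) : lpSeqNorm n p x ≤ lpSeqNorm n p y := by
  unfold lpSeqNorm
  split
  · exact iSup_mono fun t => ENNReal.coe_le_coe.2 (h t)
  · refine ENNReal.rpow_le_rpow (ENNReal.tsum_le_tsum fun t => ?_) (by positivity)
    exact ENNReal.rpow_le_rpow (ENNReal.coe_le_coe.2 (h t)) ENNReal.toReal_nonneg

lemma ennreal_Lp_add_le_tsum {p : ℝ} (hp : 1 ≤ p) (f g : ℕ → ℝ≥0∞) :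
    (∑' t, (f t + g t) ^ p) ^ (1/p) ≤ (∑' t, f t ^ p) ^ (1/p) + (∑' t, g t ^ p) ^ (1/p) := by
  have hp0 : 0 < p := lt_of_lt_of_le one_pos hp
  set A := (∑' t, f t ^ p) ^ (1/p) with hA
  set B := (∑' t, g t ^ p) ^ (1/p) with hB
  have key : ∀ s : Finset ℕ, ∑ t ∈ s, (f t + g t) ^ p ≤ (A + B) ^ p := by
    intro s
    have h1 : (∑ t ∈ s, (f t + g t) ^ p) ^ (1/p) ≤ A + B := by
      refine (ENNReal.Lp_add_le s f g hp).trans (add_le_add ?_ ?_)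
      · exact ENNReal.rpow_le_rpow (ENNReal.sum_le_tsum s) (by positivity)
      · exact ENNReal.rpow_le_rpow (ENNReal.sum_le_tsum s) (by positivity)
    calc ∑ t ∈ s, (f t + g t) ^ p
        = ((∑ t ∈ s, (f t + g t) ^ p) ^ (1/p)) ^ p := by
          rw [← ENNReal.rpow_mul, one_div_mul_cancel hp0.ne', ENNReal.rpow_one]
      _ ≤ (A + B) ^ p := ENNReal.rpow_le_rpow h1 hp0.le
  have h2 : (∑' t, (f t + g t) ^ p) ≤ (A + B) ^ p := by
    rw [ENNReal.tsum_eq_iSup_sum]; exact iSup_le key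
  calc (∑' t, (f t + g t) ^ p) ^ (1/p) ≤ ((A + B) ^ p) ^ (1/p) :=
        ENNReal.rpow_le_rpow h2 (by positivity)
    _ = A + B := by rw [← ENNReal.rpow_mul, mul_one_div_cancel hp0.ne', ENNReal.rpow_one]

lemma lpSeqNorm_add_le {n : ℕ} {p : ℝ≥0∞} (hp : 1 ≤ p) (x y : ℕ → Fin n → ℝ) :
    lpSeqNorm n p (x + y) ≤ lpSeqNorm n p x + lpSeqNorm n p y := by
  unfold lpSeqNorm
  split
  · refine iSup_le fun t => ?_
    calc (‖(x + y) t‖₊ : ℝ≥0∞) ≤ (‖x t‖₊ : ℝ≥0∞) + ‖y t‖₊ := by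
          exact_mod_cast nnnorm_add_le (x t) (y t)
      _ ≤ _ := add_le_add (le_iSup (fun t => (‖x t‖₊ : ℝ≥0∞)) t)
            (le_iSup (fun t => (‖y t‖₊ : ℝ≥0∞)) t)
  · rename_i hp'
    have hr : 1 ≤ p.toReal := by
      rw [← ENNReal.toReal_one]; exact ENNReal.toReal_mono hp' hp
    refine le_trans ?_ (ennreal_Lp_add_le_tsum hr (fun t => (‖x t‖₊ : ℝ≥0∞))
      (fun t => (‖y t‖₊ : ℝ≥0∞)))
    refine ENNReal.rpow_le_rpow (ENNReal.tsum_le_tsum fun t => ?_) (by positivity)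
    refine ENNReal.rpow_le_rpow ?_ ENNReal.toReal_nonneg
    exact_mod_cast nnnorm_add_le (x t) (y t)

lemma lpSeqNorm_lt_top_of_finite {n T : ℕ} {p : ℝ≥0∞} (hp : 1 ≤ p)
    (x : ℕ → Fin n → ℝ) (hx : ∀ t, T ≤ t → x t = 0) : lpSeqNorm n p x < ⊤ := by
  unfold lpSeqNorm
  split
  · refine lt_of_le_of_lt (iSup_le fun t => ?_)
      (ENNReal.coe_lt_top (r := ∑ t ∈ Finset.range T, ‖x t‖₊))
    by_cases ht : t < T
    · exact ENNReal.coe_le_coe.2 (Finset.single_le_sum (f := fun t => ‖x t‖₊)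
        (fun _ _ => zero_le) (Finset.mem_range.2 ht))
    · simp [hx t (not_lt.1 ht)]
  · rename_i hp'
    have hr : 1 ≤ p.toReal := by
      rw [← ENNReal.toReal_one]; exact ENNReal.toReal_mono hp' hp
    have hr0 : 0 < p.toReal := lt_of_lt_of_le one_pos hr
    have : (∑' t : ℕ, (‖x t‖₊ : ℝ≥0∞) ^ p.toReal)
        = ∑ t ∈ Finset.range T, (‖x t‖₊ : ℝ≥0∞) ^ p.toReal := by
      refine tsum_eq_sum fun t ht => ?_
      rw [hx t (not_lt.1 (fun h => ht (Finset.mem_range.2 h)))]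
      simp [ENNReal.zero_rpow_of_pos hr0]
    rw [this]
    refine ENNReal.rpow_lt_top_of_nonneg (by positivity) ?_
    refine (ENNReal.sum_lt_top.2 fun t _ => ?_).ne
    exact ENNReal.rpow_lt_top_of_nonneg hr0.le ENNReal.coe_ne_top

lemma ennreal_geom_bound {γ : ℝ≥0} (hγ : γ < 1) {S c : ℝ≥0∞} (hS : S < ⊤)
    (h : S ≤ γ * S + c) : S ≤ c / (1 - (γ : ℝ≥0∞)) := by
  have h1 : (1 - (γ : ℝ≥0∞)) ≠ 0 := by
    intro he
    have : (1 : ℝ≥0∞) ≤ γ := tsub_eq_zero_iff_le.1 he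
    exact hγ.not_ge (by exact_mod_cast this)
  have h2 : (1 - (γ : ℝ≥0∞)) ≠ ∞ := (tsub_le_self.trans_lt ENNReal.one_lt_top).ne
  rw [ENNReal.le_div_iff_mul_le (Or.inl h1) (Or.inl h2)]
  have hfin : (γ : ℝ≥0∞) * S ≠ ∞ := ENNReal.mul_ne_top ENNReal.coe_ne_top hS.ne
  have hγ1 : (γ : ℝ≥0∞) ≤ 1 := by exact_mod_cast hγ.le
  have key : S * (1 - (γ : ℝ≥0∞)) + (γ : ℝ≥0∞) * S = S := by
    rw [mul_comm (γ : ℝ≥0∞) S, ← mul_add, tsub_add_cancel_of_le hγ1, mul_one]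
  rw [← ENNReal.add_le_add_iff_right hfin, key]
  exact h.trans_eq (add_comm _ _)

noncomputable def sgSolve (n : ℕ)
    (Δ : (t : ℕ) → (Fin t → (Fin n → ℝ)) → (Fin n → ℝ)) (w : ℕ → Fin n → ℝ) :
    ℕ → Fin n → ℝ
  | t => Δ t (fun j : Fin t => sgSolve n Δ w j) + w t
  decreasing_by exact j.isLt

/-- Small-gain theorem for strictly causal operators
(Theorem A.1). A strictly causal operator `Δ` is given by component functions
`Δ_t : (ℝⁿ)^t → ℝⁿ` acting by `Δ(x)_t = Δ_t(x_{t−1}, …, x_0)`.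
(a) For every `w` there is a unique `ŵ` with `ŵ_t = Δ(ŵ)_t + w_t` for all `t`.
(b) If `1 ≤ p` and `‖Δ(x)‖_p ≤ γ‖x‖_p + β` for all `x` with `‖x‖_p < ∞`,
where `0 ≤ γ < 1`, `0 ≤ β`, then the unique solution satisfies
`‖ŵ‖_p ≤ (‖w‖_p + β)/(1 − γ)` whenever `‖w‖_p < ∞`. -/
theorem small_gain_strictly_causal (n : ℕ)
    (Δ : (t : ℕ) → (Fin t → (Fin n → ℝ)) → (Fin n → ℝ)) :
    (∀ w : ℕ → Fin n → ℝ, ∃! wHat : ℕ → Fin n → ℝ,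
      ∀ t : ℕ, wHat t = Δ t (fun j : Fin t => wHat j) + w t) ∧
    (∀ p : ℝ≥0∞, 1 ≤ p → ∀ γ β : ℝ≥0, γ < 1 →
      (∀ x : ℕ → Fin n → ℝ, lpSeqNorm n p x < ⊤ →
        lpSeqNorm n p (fun t => Δ t (fun j : Fin t => x j)) ≤
          (γ : ℝ≥0∞) * lpSeqNorm n p x + (β : ℝ≥0∞)) →
      ∀ w wHat : ℕ → Fin n → ℝ, lpSeqNorm n p w < ⊤ →
        (∀ t : ℕ, wHat t = Δ t (fun j : Fin t => wHat j) + w t) →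
        lpSeqNorm n p wHat ≤ (lpSeqNorm n p w + (β : ℝ≥0∞)) / (1 - (γ : ℝ≥0∞))) := by
  constructor
  · -- part (a)
    intro w
    refine ⟨sgSolve n Δ w, fun t => by conv_lhs => rw [sgSolve], ?_⟩
    intro y hy
    funext t
    induction t using Nat.strong_induction_on with
    | _ t ih =>
      have hfun : (fun j : Fin t => y j) = fun j : Fin t => sgSolve n Δ w j :=
        funext fun j => ih j j.isLt
      rw [hy t, hfun]
      conv_rhs => rw [sgSolve]
  · -- part (b)
    intro p hp1 γ β hγ hΔ w wHat hw heq
    set c : ℝ≥0∞ := lpSeqNorm n p w + (β : ℝ≥0∞) with hc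
    set bound : ℝ≥0∞ := c / (1 - (γ : ℝ≥0∞)) with hbound
    -- truncations
    set trunc : ℕ → ℕ → Fin n → ℝ := fun T t => if t < T then wHat t else 0 with htrunc
    have htz : ∀ T t, T ≤ t → trunc T t = 0 := fun T t ht => if_neg (not_lt.2 ht)
    have hSfin : ∀ T, lpSeqNorm n p (trunc T) < ⊤ :=
      fun T => lpSeqNorm_lt_top_of_finite hp1 _ (htz T)
    have hSbound : ∀ T : ℕ, lpSeqNorm n p (trunc T) ≤ bound := by
      intro T
      set D : ℕ → Fin n → ℝ := fun t => Δ t (fun j : Fin t => trunc T j) with hD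
      have step1 : lpSeqNorm n p (trunc T) ≤ lpSeqNorm n p (D + w) := by
        refine lpSeqNorm_mono fun t => ?_
        by_cases ht : t < T
        · have hDt : D t = Δ t (fun j : Fin t => wHat j) := by
            refine congrArg _ (funext fun j => ?_)
            simp only [htrunc]
            rw [if_pos (j.isLt.trans ht)]
          have : trunc T t = (D + w) t := by
            simp only [htrunc, Pi.add_apply, hDt, if_pos ht]
            exact heq t
          exact le_of_eq (congrArg _ this)
        · simp [htz T t (not_lt.1 ht)]
      have step2 : lpSeqNorm n p (D + w) ≤ (γ : ℝ≥0∞) * lpSeqNorm n p (trunc T) + c := by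
        refine (lpSeqNorm_add_le hp1 D w).trans ?_
        have := hΔ (trunc T) (hSfin T)
        calc lpSeqNorm n p D + lpSeqNorm n p w
            ≤ ((γ : ℝ≥0∞) * lpSeqNorm n p (trunc T) + (β : ℝ≥0∞)) + lpSeqNorm n p w :=
              add_le_add_left this _
          _ = (γ : ℝ≥0∞) * lpSeqNorm n p (trunc T) + c := by
              rw [hc]; ring
      exact ennreal_geom_bound hγ (hSfin T) (step1.trans step2)
    -- conclude
    by_cases hp' : p = ∞
    · simp only [lpSeqNorm, if_pos hp'] at hSbound ⊢
      refine iSup_le fun t => ?_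
      refine le_trans ?_ (hSbound (t + 1))
      have : (‖wHat t‖₊ : ℝ≥0∞) = (‖trunc (t + 1) t‖₊ : ℝ≥0∞) := by
        simp only [htrunc]; rw [if_pos (Nat.lt_succ_self t)]
      rw [this]
      exact le_iSup (fun s => (‖trunc (t + 1) s‖₊ : ℝ≥0∞)) t
    · simp only [lpSeqNorm, if_neg hp'] at hSbound ⊢
      have hr : 1 ≤ p.toReal := by
        rw [← ENNReal.toReal_one]; exact ENNReal.toReal_mono hp' hp1
      have hr0 : 0 < p.toReal := lt_of_lt_of_le one_pos hr
      have hsum : (∑' t : ℕ, (‖wHat t‖₊ : ℝ≥0∞) ^ p.toReal) ≤ bound ^ p.toReal := by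
        rw [ENNReal.tsum_eq_iSup_sum]
        refine iSup_le fun s => ?_
        set T : ℕ := s.sup id + 1 with hT
        have hmem : ∀ t ∈ s, t < T := fun t ht =>
          Nat.lt_succ_of_le (Finset.le_sup (f := id) ht)
        have e1 : ∑ t ∈ s, (‖wHat t‖₊ : ℝ≥0∞) ^ p.toReal
            = ∑ t ∈ s, (‖trunc T t‖₊ : ℝ≥0∞) ^ p.toReal := by
          refine Finset.sum_congr rfl fun t ht => ?_
          simp only [htrunc]; rw [if_pos (hmem t ht)]
        rw [e1]
        refine (ENNReal.sum_le_tsum s).trans ?_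
        have h3 := hSbound T
        calc (∑' t : ℕ, (‖trunc T t‖₊ : ℝ≥0∞) ^ p.toReal)
            = ((∑' t : ℕ, (‖trunc T t‖₊ : ℝ≥0∞) ^ p.toReal) ^ (1 / p.toReal)) ^ p.toReal := by
              rw [← ENNReal.rpow_mul, one_div_mul_cancel hr0.ne', ENNReal.rpow_one]
          _ ≤ bound ^ p.toReal := ENNReal.rpow_le_rpow h3 hr0.le
      calc (∑' t : ℕ, (‖wHat t‖₊ : ℝ≥0∞) ^ p.toReal) ^ (1 / p.toReal)
          ≤ (bound ^ p.toReal) ^ (1 / p.toReal) := ENNReal.rpow_le_rpow hsum (by positivity)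
        _ = bound := by
            rw [← ENNReal.rpow_mul, mul_one_div_cancel hr0.ne', ENNReal.rpow_one]
end
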